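/- Let d ≥ 1, L > 0, t > 0, and let f : ℝ^d → ℝ be convex and L-smooth, i.e. f is differentiable and ‖∇f(x) − ∇f(y)‖ ≤ L‖x − y‖ for all x, y ∈ ℝ^d. Then the smoothed function f_t is differentiable and for every x ∈ ℝ^d one has ‖∇f(x) − ∇f_t(x)‖² ≤ L²·t². -/

import Mathlib

set_option maxHeartbeats 1000000

open MeasureTheory

/-- The smoothed function `f_t(x) = 𝔼_r [f (x + t r)]`, where `r` is uniform on the closed
unit ball of `ℝ^d`. -/
noncomputable def smoothedFn {d : ℕ} (t : ℝ) (f : EuclideanSpace ℝ (Fin d) → ℝ)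
    (x : EuclideanSpace ℝ (Fin d)) : ℝ :=
  ⨍ r in Metric.closedBall (0 : EuclideanSpace ℝ (Fin d)) 1, f (x + t • r)

theorem smoothed_grad_deviation {d : ℕ} (hd : 1 ≤ d) (L t : ℝ) (hL : 0 < L) (ht : 0 < t)
    (f : EuclideanSpace ℝ (Fin d) → ℝ)
    (hconv : ConvexOn ℝ Set.univ f)
    (hdiff : Differentiable ℝ f)
    (hsmooth : ∀ x y : EuclideanSpace ℝ (Fin d),
      ‖gradient f x - gradient f y‖ ≤ L * ‖x - y‖) :
    Differentiable ℝ (smoothedFn t f) ∧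
      ∀ x : EuclideanSpace ℝ (Fin d),
        ‖gradient f x - gradient (smoothedFn t f) x‖ ^ 2 ≤ L ^ 2 * t ^ 2 := by
  classical
  set B := Metric.closedBall (0 : EuclideanSpace ℝ (Fin d)) 1 with hB
  set c : ℝ := (volume B).toReal⁻¹ with hc
  have hBpos : 0 < volume B := Metric.measure_closedBall_pos _ _ one_pos
  have hBfin : volume B < ⊤ := measure_closedBall_lt_top
  have hBtoReal : 0 < (volume B).toReal := ENNReal.toReal_pos hBpos.ne' hBfin.ne
  have hc_pos : 0 < c := inv_pos.mpr hBtoReal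
  have hcancel : c * (volume B).toReal = 1 := inv_mul_cancel₀ hBtoReal.ne'
  -- Lipschitz bound for fderiv
  have hfd : ∀ x y : EuclideanSpace ℝ (Fin d),
      ‖fderiv ℝ f x - fderiv ℝ f y‖ ≤ L * ‖x - y‖ := by
    intro x y
    have : ‖gradient f x - gradient f y‖ = ‖fderiv ℝ f x - fderiv ℝ f y‖ := by
      rw [gradient, gradient, ← map_sub]
      exact (InnerProductSpace.toDual ℝ _).symm.norm_map _
    rw [← this]; exact hsmooth x y
  have hfdc : Continuous (fderiv ℝ f) := by
    refine (LipschitzWith.of_dist_le_mul (K := L.toNNReal) ?_).continuous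
    intro x y
    simpa [dist_eq_norm, Real.coe_toNNReal L hL.le] using hfd x y
  have hgc : Continuous (gradient f) := by
    exact ((InnerProductSpace.toDual ℝ _).symm.continuous).comp hfdc
  -- integrability of the gradient-type integrands
  have hBc : IsCompact B := isCompact_closedBall _ _
  have hgint : ∀ x : EuclideanSpace ℝ (Fin d),
      IntegrableOn (fun r => gradient f (x + t • r)) B volume := fun x =>
    ((hgc.comp (continuous_const.add (continuous_const_smul t))).continuousOn).integrableOn_compact hBc
  have hfdint : ∀ x : EuclideanSpace ℝ (Fin d),
      IntegrableOn (fun r => fderiv ℝ f (x + t • r)) B volume := fun x =>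
    ((hfdc.comp (continuous_const.add (continuous_const_smul t))).continuousOn).integrableOn_compact hBc
  -- main derivative statement
  have key : ∀ x₀ : EuclideanSpace ℝ (Fin d),
      HasFDerivAt (smoothedFn t f)
        (c • ∫ r in B, fderiv ℝ f (x₀ + t • r)) x₀ := by
    intro x₀
    have main : HasFDerivAt (fun x => ∫ r in B, f (x + t • r))
        (∫ r in B, fderiv ℝ f (x₀ + t • r)) x₀ := by
      apply hasFDerivAt_integral_of_dominated_of_fderiv_le
        (F' := fun x r => fderiv ℝ f (x + t • r))
        (bound := fun _ => ‖fderiv ℝ f x₀‖ + L * (1 + t)) (s := Metric.ball x₀ 1) (Metric.ball_mem_nhds x₀ one_pos)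
      · filter_upwards with x
        exact ((hdiff.continuous.comp (continuous_const.add (continuous_const_smul t))).aestronglyMeasurable)
      · exact (hdiff.continuous.comp (continuous_const.add (continuous_const_smul t))).continuousOn.integrableOn_compact hBc
      · exact ((hfdc.comp (continuous_const.add (continuous_const_smul t))).aestronglyMeasurable)
      · rw [ae_restrict_iff' measurableSet_closedBall]
        filter_upwards with r hr x hx
        have hrn : ‖r‖ ≤ 1 := by simpa using hr
        have h1 : ‖fderiv ℝ f (x + t • r)‖ ≤ ‖fderiv ℝ f x₀‖ + L * ‖x + t • r - x₀‖ := by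
          have := hfd (x + t • r) x₀
          have := norm_sub_norm_le (fderiv ℝ f (x + t • r)) (fderiv ℝ f x₀)
          linarith [hfd (x + t • r) x₀,
            norm_sub_norm_le (fderiv ℝ f (x + t • r)) (fderiv ℝ f x₀)]
        have h2 : ‖x + t • r - x₀‖ ≤ 1 + t := by
          have : x + t • r - x₀ = (x - x₀) + t • r := by abel
          rw [this]
          refine (norm_add_le _ _).trans ?_
          have hx1 : ‖x - x₀‖ ≤ 1 := by
            have := mem_ball_iff_norm.mp hx; linarith
          have : ‖t • r‖ ≤ t := by
            rw [norm_smul, Real.norm_eq_abs, abs_of_pos ht]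
            nlinarith
          linarith
        nlinarith [h1, h2]
      · exact integrableOn_const hBfin.ne
      · filter_upwards with r x _
        have : HasFDerivAt (fun x => x + t • r) (ContinuousLinearMap.id ℝ _) x := by
          simpa using (hasFDerivAt_id x).add_const (t • r)
        simpa [Function.comp_def] using (hdiff (x + t • r)).hasFDerivAt.comp x this
    have : smoothedFn t f = fun x => c • ∫ r in B, f (x + t • r) := by
      funext x; rw [smoothedFn, setAverage_eq]; rfl
    rw [this]
    exact main.const_smul c
  refine ⟨fun x => (key x).differentiableAt, fun x => ?_⟩
  -- compute the gradient of the smoothed function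
  have hgrad : gradient (smoothedFn t f) x = c • ∫ r in B, gradient f (x + t • r) := by
    have h1 : fderiv ℝ (smoothedFn t f) x = c • ∫ r in B, fderiv ℝ f (x + t • r) :=
      (key x).fderiv
    rw [gradient, h1, _root_.map_smul]
    congr 1
    have := ((InnerProductSpace.toDual ℝ (EuclideanSpace ℝ (Fin d))).symm.toLinearIsometry.toContinuousLinearMap).integral_comp_comm (hfdint x)
    simpa [gradient] using this.symm
  have hconst : gradient f x = c • ∫ _r in B, gradient f x := by
    rw [setIntegral_const, smul_smul, measureReal_def, hcancel, one_smul]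
  have hdiffint : gradient f x - gradient (smoothedFn t f) x
      = c • ∫ r in B, (gradient f x - gradient f (x + t • r)) := by
    rw [hgrad, integral_sub (integrableOn_const (C := gradient f x) hBfin.ne) (hgint x), smul_sub]
    rw [← hconst]
  have hnorm : ‖gradient f x - gradient (smoothedFn t f) x‖ ≤ L * t := by
    rw [hdiffint, norm_smul, Real.norm_eq_abs, abs_of_pos hc_pos]
    have hb : ‖∫ r in B, (gradient f x - gradient f (x + t • r))‖ ≤ (L * t) * (volume B).toReal := by
      apply norm_setIntegral_le_of_norm_le_const hBfin (fun r hr => ?_)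
      have hrn : ‖r‖ ≤ 1 := by simpa [B] using hr
      have := hsmooth x (x + t • r)
      have hxx : ‖x - (x + t • r)‖ = t * ‖r‖ := by
        have : x - (x + t • r) = -(t • r) := by abel
        rw [this, norm_neg, norm_smul, Real.norm_eq_abs, abs_of_pos ht]
      rw [hxx] at this
      nlinarith [norm_nonneg r, mul_pos hL ht, mul_nonneg hL.le ht.le]
    calc c * ‖∫ r in B, (gradient f x - gradient f (x + t • r))‖
        ≤ c * ((L * t) * (volume B).toReal) := by nlinarith
      _ = L * t := by rw [mul_comm (L*t), ← mul_assoc, hcancel, one_mul]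
  calc ‖gradient f x - gradient (smoothedFn t f) x‖ ^ 2
      ≤ (L * t) ^ 2 := by nlinarith [norm_nonneg (gradient f x - gradient (smoothedFn t f) x)]
    _ = L ^ 2 * t ^ 2 := by ring
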